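/- Let W be a reducible Coxeter group, W = W₁ × W₂ a direct product of standard parabolic subgroups on disjoint generator sets. The right weak order on W is isomorphic to the product of the right weak orders on W₁ and W₂. Consequently, W contains an infinite antichain in the right weak order if and only if W₁ or W₂ does. -/

import Mathlib

/-- The right weak order on a Coxeter group: `v ≤_R w` iff `ℓ(v) + ℓ(v⁻¹w) = ℓ(w)`. -/
def weakLE {B : Type*} {W : Type*} [Group W] {M : CoxeterMatrix B}
    (cs : CoxeterSystem M W) (v w : W) : Prop :=
  cs.length v + cs.length (v⁻¹ * w) = cs.length w

/-- The Coxeter matrix of a reducible Coxeter system whose diagram is the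
disjoint union of the diagrams of `M₁` and `M₂` (generators from different
components commute). -/
def CoxeterMatrix.sumMatrix {B₁ B₂ : Type*} (M₁ : CoxeterMatrix B₁)
    (M₂ : CoxeterMatrix B₂) : CoxeterMatrix (B₁ ⊕ B₂) where
  M := Matrix.of fun i j =>
    match i, j with
    | .inl a, .inl b => M₁ a b
    | .inr a, .inr b => M₂ a b
    | _, _ => 2
  isSymm := by
    unfold Matrix.IsSymm
    ext i j
    cases i <;> cases j <;>
      simp [Matrix.transpose_apply, M₁.symmetric, M₂.symmetric]
  diagonal i := by cases i <;> simp
  off_diagonal i j h := by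
    cases i <;> cases j <;>
      simp_all [M₁.off_diagonal, M₂.off_diagonal, Sum.inl.injEq, Sum.inr.injEq]

section Aux

variable {B W : Type*} [Group W] {M : CoxeterMatrix B} (cs : CoxeterSystem M W)

theorem weakLE_refl (w : W) : weakLE cs w w := by
  simp [weakLE]

theorem weakLE_length_le {v w : W} (h : weakLE cs v w) : cs.length v ≤ cs.length w := by
  unfold weakLE at h; omega

theorem weakLE_eq_of_length_le {v w : W} (h : weakLE cs v w)
    (hl : cs.length w ≤ cs.length v) : v = w := by
  unfold weakLE at h
  have h0 : cs.length (v⁻¹ * w) = 0 := by omega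
  rw [cs.length_eq_zero_iff] at h0
  exact inv_mul_eq_one.mp h0

theorem weakLE_trans {u v w : W} (h1 : weakLE cs u v) (h2 : weakLE cs v w) :
    weakLE cs u w := by
  unfold weakLE at *
  have t1 : cs.length (u⁻¹ * w) ≤ cs.length (u⁻¹ * v) + cs.length (v⁻¹ * w) := by
    have := cs.length_mul_le (u⁻¹ * v) (v⁻¹ * w)
    simpa [mul_assoc] using this
  have t2 : cs.length w ≤ cs.length u + cs.length (u⁻¹ * w) := by
    have := cs.length_mul_le u (u⁻¹ * w)
    simpa using this
  omega

theorem exists_infinite_antichain_of_bad_seq (a : ℕ → W)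
    (ha : ∀ i j, i < j → ¬ weakLE cs (a i) (a j)) :
    ∃ A : Set W, A.Infinite ∧ IsAntichain (weakLE cs) A := by
  haveI : IsTrans ℕ (fun x1 x2 => x1 ≤ x2) := ⟨fun _ _ _ => le_trans⟩
  obtain ⟨g, hg | hg⟩ :=
    exists_increasing_or_nonincreasing_subseq (fun x1 x2 => x1 ≤ x2) (fun n => cs.length (a n))
  · -- lengths nondecreasing along `g`
    set b : ℕ → W := fun n => a (g n) with hb
    have hbad : ∀ i j, i < j → ¬ weakLE cs (b i) (b j) :=
      fun i j hij => ha _ _ (g.strictMono hij)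
    have hnot : ∀ i j, i ≠ j → ¬ weakLE cs (b i) (b j) := by
      intro i j hij hle
      rcases hij.lt_or_gt with h | h
      · exact hbad i j h hle
      · -- j < i : lengths give b i = b j
        have hlen : cs.length (b j) ≤ cs.length (b i) := hg j i h
        have := weakLE_eq_of_length_le cs hle hlen
        exact hbad j i h (this ▸ weakLE_refl cs (b i))
    have hinj : Function.Injective b := by
      intro i j hij
      by_contra hne
      exact hnot i j hne (hij ▸ weakLE_refl cs (b i))
    refine ⟨Set.range b, Set.infinite_range_of_injective hinj, ?_⟩
    rintro _ ⟨i, rfl⟩ _ ⟨j, rfl⟩ hne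
    exact hnot i j (fun h => hne (h ▸ rfl))
  · -- lengths strictly decreasing : impossible
    exfalso
    set f : ℕ → ℕ := fun n => cs.length (a (g n)) with hf
    have hdec : ∀ n, f (n + 1) < f n := fun n =>
      Nat.lt_of_not_le (hg n (n + 1) (Nat.lt_succ_self n))
    have key : ∀ n, f n + n ≤ f 0 := by
      intro n
      induction n with
      | zero => omega
      | succ k ih => have := hdec k; omega
    have := key (f 0 + 1)
    omega

theorem pwo_univ_of_no_infinite_antichain
    (h : ¬ ∃ A : Set W, A.Infinite ∧ IsAntichain (weakLE cs) A) :
    (Set.univ : Set W).PartiallyWellOrderedOn (weakLE cs) := by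
  intro a
  by_contra hc
  push_neg at hc
  exact h (exists_infinite_antichain_of_bad_seq cs (fun n => (a n : W)) hc)

end Aux

/-- For a reducible Coxeter group `W = W₁ × W₂` (diagram a disjoint union),
the right weak order on `W` is isomorphic to the product of the right weak
orders on `W₁` and `W₂`; consequently `W` contains an infinite antichain in
the right weak order iff `W₁` or `W₂` does. -/
theorem reducible_weak_order_product {B₁ B₂ : Type*} {W W₁ W₂ : Type*}
    [Group W] [Group W₁] [Group W₂]
    {M₁ : CoxeterMatrix B₁} {M₂ : CoxeterMatrix B₂}
    (cs : CoxeterSystem (M₁.sumMatrix M₂) W)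
    (cs₁ : CoxeterSystem M₁ W₁) (cs₂ : CoxeterSystem M₂ W₂) :
    ∃ e : W ≃* W₁ × W₂,
      (∀ i : B₁, e (cs.simple (.inl i)) = (cs₁.simple i, 1)) ∧
      (∀ i : B₂, e (cs.simple (.inr i)) = (1, cs₂.simple i)) ∧
      (∀ v w : W, weakLE cs v w ↔
        weakLE cs₁ (e v).1 (e w).1 ∧ weakLE cs₂ (e v).2 (e w).2) ∧
      ((∃ A : Set W, A.Infinite ∧ IsAntichain (weakLE cs) A) ↔
        (∃ A₁ : Set W₁, A₁.Infinite ∧ IsAntichain (weakLE cs₁) A₁) ∨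
        (∃ A₂ : Set W₂, A₂.Infinite ∧ IsAntichain (weakLE cs₂) A₂)) := by
  classical
  -- the forward homomorphism
  set f : B₁ ⊕ B₂ → W₁ × W₂ :=
    Sum.elim (fun i => (cs₁.simple i, 1)) (fun j => (1, cs₂.simple j)) with hfdef
  have hf : CoxeterMatrix.IsLiftable (M₁.sumMatrix M₂) f := by
    rintro (i | i) (i' | i') <;>
      simp [hfdef, Prod.ext_iff, Prod.pow_fst, Prod.pow_snd, cs₁.simple_mul_simple_pow,
        cs₂.simple_mul_simple_pow, CoxeterMatrix.sumMatrix]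
  set φ : W →* W₁ × W₂ := cs.lift ⟨f, hf⟩ with hφdef
  have hφl : ∀ i : B₁, φ (cs.simple (.inl i)) = (cs₁.simple i, 1) := by
    intro i; rw [hφdef, cs.lift_apply_simple]; rfl
  have hφr : ∀ j : B₂, φ (cs.simple (.inr j)) = (1, cs₂.simple j) := by
    intro j; rw [hφdef, cs.lift_apply_simple]; rfl
  -- the backward homomorphism
  have h₁lift : CoxeterMatrix.IsLiftable M₁ (fun i => cs.simple (Sum.inl i)) := by
    intro i i'
    exact cs.simple_mul_simple_pow (Sum.inl i) (Sum.inl i')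
  have h₂lift : CoxeterMatrix.IsLiftable M₂ (fun j => cs.simple (Sum.inr j)) := by
    intro j j'
    exact cs.simple_mul_simple_pow (Sum.inr j) (Sum.inr j')
  set ψ₁ : W₁ →* W := cs₁.lift ⟨_, h₁lift⟩ with hψ₁def
  set ψ₂ : W₂ →* W := cs₂.lift ⟨_, h₂lift⟩ with hψ₂def
  have hψ₁ : ∀ i, ψ₁ (cs₁.simple i) = cs.simple (Sum.inl i) := by
    intro i; rw [hψ₁def, cs₁.lift_apply_simple]
  have hψ₂ : ∀ j, ψ₂ (cs₂.simple j) = cs.simple (Sum.inr j) := by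
    intro j; rw [hψ₂def, cs₂.lift_apply_simple]
  have comm0 : ∀ i j, Commute (cs.simple (Sum.inl i)) (cs.simple (Sum.inr j)) := by
    intro i j
    have h2 : (cs.simple (Sum.inl i) * cs.simple (Sum.inr j)) ^ 2 = 1 :=
      cs.simple_mul_simple_pow (Sum.inl i) (Sum.inr j)
    have h2' : (cs.simple (Sum.inl i) * cs.simple (Sum.inr j)) *
        (cs.simple (Sum.inl i) * cs.simple (Sum.inr j)) = 1 := by
      rw [← sq]; exact h2
    have : cs.simple (Sum.inl i) * cs.simple (Sum.inr j) =
        (cs.simple (Sum.inl i) * cs.simple (Sum.inr j))⁻¹ :=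
      eq_inv_of_mul_eq_one_left h2'
    unfold Commute SemiconjBy
    rw [this, mul_inv_rev, cs.inv_simple, cs.inv_simple]
  have comm : ∀ a b, Commute (ψ₁ a) (ψ₂ b) := by
    intro a b
    induction a using cs₁.simple_induction with
    | simple i =>
      induction b using cs₂.simple_induction with
      | simple j => rw [hψ₁, hψ₂]; exact comm0 i j
      | one => rw [map_one]; exact Commute.one_right _
      | mul x y hx hy => rw [map_mul]; exact hx.mul_right hy
    | one => rw [map_one]; exact Commute.one_left _
    | mul x y hx hy => rw [map_mul]; exact hx.mul_left hy
  set ψ : W₁ × W₂ →* W := ψ₁.noncommCoprod ψ₂ comm with hψdef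
  have hψ : ∀ p : W₁ × W₂, ψ p = ψ₁ p.1 * ψ₂ p.2 := fun p => rfl
  -- ψ ∘ φ = id
  have hψφ : ψ.comp φ = MonoidHom.id W := by
    apply cs.ext_simple
    rintro (i | j) <;>
      simp [hφl, hφr, hψ, hψ₁, hψ₂]
  -- φ ∘ ψ = id
  have hφψ₁ : ∀ a : W₁, φ (ψ₁ a) = (a, 1) := by
    intro a
    have : (φ.comp ψ₁) = (MonoidHom.inl W₁ W₂) := by
      apply cs₁.ext_simple
      intro i
      simp [hψ₁, hφl]
    calc φ (ψ₁ a) = (φ.comp ψ₁) a := rfl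
      _ = (a, 1) := by rw [this]; rfl
  have hφψ₂ : ∀ b : W₂, φ (ψ₂ b) = (1, b) := by
    intro b
    have : (φ.comp ψ₂) = (MonoidHom.inr W₁ W₂) := by
      apply cs₂.ext_simple
      intro j
      simp [hψ₂, hφr]
    calc φ (ψ₂ b) = (φ.comp ψ₂) b := rfl
      _ = (1, b) := by rw [this]; rfl
  have hφψ : φ.comp ψ = MonoidHom.id (W₁ × W₂) := by
    ext p
    · rcases p with ⟨a, b⟩
      simp [hψ, map_mul, hφψ₁, hφψ₂]
    · rcases p with ⟨a, b⟩
      simp [hψ, map_mul, hφψ₁, hφψ₂]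
  set e : W ≃* W₁ × W₂ := MonoidHom.toMulEquiv φ ψ hψφ hφψ with hedef
  have he : ∀ w, e w = φ w := fun _ => rfl
  have hesymm : ∀ p, e.symm p = ψ p := fun _ => rfl
  -- the word splitting lemma
  have word : ∀ ω : List (B₁ ⊕ B₂), φ (cs.wordProd ω) =
      (cs₁.wordProd (ω.filterMap Sum.getLeft?), cs₂.wordProd (ω.filterMap Sum.getRight?)) := by
    intro ω
    induction ω with
    | nil => simp [Prod.ext_iff]
    | cons a ω ih =>
      rw [cs.wordProd_cons, map_mul, ih]
      cases a with
      | inl i =>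
        simp [hφl, List.filterMap_cons, cs₁.wordProd_cons, Prod.ext_iff]
      | inr j =>
        simp [hφr, List.filterMap_cons, cs₂.wordProd_cons, Prod.ext_iff]
  have count : ∀ ω : List (B₁ ⊕ B₂),
      (ω.filterMap Sum.getLeft?).length + (ω.filterMap Sum.getRight?).length = ω.length := by
    intro ω
    induction ω with
    | nil => simp
    | cons a ω ih => cases a <;> simp [List.filterMap_cons] <;> omega
  -- length formula
  have hlen : ∀ w : W, cs.length w = cs₁.length (φ w).1 + cs₂.length (φ w).2 := by
    intro w
    apply le_antisymm
    · obtain ⟨ω₁, hω₁len, hω₁⟩ := cs₁.exists_reduced_word (φ w).1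
      obtain ⟨ω₂, hω₂len, hω₂⟩ := cs₂.exists_reduced_word (φ w).2
      have hp : φ (cs.wordProd (ω₁.map Sum.inl ++ ω₂.map Sum.inr)) = φ w := by
        rw [word]
        have l1 : (ω₁.map Sum.inl ++ ω₂.map Sum.inr).filterMap Sum.getLeft? = ω₁ := by
          simp [List.filterMap_append, List.filterMap_map, Function.comp_def]
        have l2 : (ω₁.map Sum.inl ++ ω₂.map Sum.inr).filterMap Sum.getRight? = ω₂ := by
          simp [List.filterMap_append, List.filterMap_map, Function.comp_def]
        rw [l1, l2, ← hω₁, ← hω₂]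
      have hinj : Function.Injective φ := e.injective
      have hw : cs.wordProd (ω₁.map Sum.inl ++ ω₂.map Sum.inr) = w := hinj hp
      calc cs.length w ≤ (ω₁.map Sum.inl ++ ω₂.map Sum.inr).length :=
            hw ▸ cs.length_wordProd_le _
        _ = ω₁.length + ω₂.length := by simp
        _ = cs₁.length (φ w).1 + cs₂.length (φ w).2 := by unfold CoxeterSystem.IsReduced at hω₁len hω₂len; rw [hω₁, hω₂, hω₁len, hω₂len]
    · obtain ⟨ω, hωlen, hω⟩ := cs.exists_reduced_word w
      have h1 := cs₁.length_wordProd_le (ω.filterMap Sum.getLeft?)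
      have h2 := cs₂.length_wordProd_le (ω.filterMap Sum.getRight?)
      have hw := word ω
      rw [← hω] at hw
      rw [hw]
      have := count ω
      simp only []
      unfold CoxeterSystem.IsReduced at hωlen; rw [← hω] at hωlen
      omega
  -- the weak order comparison
  have hiff : ∀ v w : W, weakLE cs v w ↔
      weakLE cs₁ (e v).1 (e w).1 ∧ weakLE cs₂ (e v).2 (e w).2 := by
    intro v w
    have hvw : φ (v⁻¹ * w) = ((φ v).1⁻¹ * (φ w).1, (φ v).2⁻¹ * (φ w).2) := by
      rw [map_mul, map_inv]; rfl
    have t1 : cs₁.length (φ w).1 ≤ cs₁.length (φ v).1 + cs₁.length ((φ v).1⁻¹ * (φ w).1) := by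
      have := cs₁.length_mul_le (φ v).1 ((φ v).1⁻¹ * (φ w).1)
      simpa using this
    have t2 : cs₂.length (φ w).2 ≤ cs₂.length (φ v).2 + cs₂.length ((φ v).2⁻¹ * (φ w).2) := by
      have := cs₂.length_mul_le (φ v).2 ((φ v).2⁻¹ * (φ w).2)
      simpa using this
    simp only [he, weakLE, hlen, hvw]
    constructor
    · intro h; constructor <;> omega
    · intro ⟨ha, hb⟩; omega
  refine ⟨e, hφl, hφr, hiff, ?_⟩
  -- the antichain statement
  constructor
  · rintro ⟨A, hAinf, hAanti⟩
    by_cases h₁ : ∃ A₁ : Set W₁, A₁.Infinite ∧ IsAntichain (weakLE cs₁) A₁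
    · exact Or.inl h₁
    right
    have pwo1 : (Set.univ : Set W₁).PartiallyWellOrderedOn (weakLE cs₁) :=
      pwo_univ_of_no_infinite_antichain cs₁ h₁
    haveI : IsTrans W₁ (weakLE cs₁) := ⟨fun _ _ _ => weakLE_trans cs₁⟩
    haveI : IsRefl W₁ (weakLE cs₁) := ⟨weakLE_refl cs₁⟩
    haveI : IsPreorder W₁ (weakLE cs₁) :=
      { refl := weakLE_refl cs₁, trans := fun _ _ _ => weakLE_trans cs₁ }
    set a : ℕ → W := fun n => (hAinf.natEmbedding A n : W) with hadef
    have hamem : ∀ n, a n ∈ A := fun n => (hAinf.natEmbedding A n).2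
    have hainj : Function.Injective a :=
      Subtype.val_injective.comp (hAinf.natEmbedding A).injective
    obtain ⟨g, hg⟩ := pwo1.exists_monotone_subseq (f := fun n => (e (a n)).1)
      (fun _ => Set.mem_univ _)
    set b : ℕ → W₂ := fun n => (e (a (g n))).2 with hbdef
    have hbad : ∀ i j, i < j → ¬ weakLE cs₂ (b i) (b j) := by
      intro i j hij h2
      have hco : weakLE cs (a (g i)) (a (g j)) :=
        (hiff _ _).mpr ⟨hg i j (le_of_lt hij), h2⟩
      have hne : a (g i) ≠ a (g j) :=
        fun h => (Nat.lt_irrefl i) (by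
          have := hainj h
          have := g.injective this
          omega)
      exact hAanti (hamem (g i)) (hamem (g j)) hne hco
    exact exists_infinite_antichain_of_bad_seq cs₂ b hbad
  · rintro (⟨A₁, hinf, hanti⟩ | ⟨A₂, hinf, hanti⟩)
    · refine ⟨(fun a => e.symm (a, 1)) '' A₁, ?_, ?_⟩
      · apply Set.Infinite.image _ hinf
        intro x _ y _ hxy
        have := e.symm.injective hxy
        exact (Prod.mk.injEq _ _ _ _ ▸ this).1
      · rintro _ ⟨x, hx, rfl⟩ _ ⟨y, hy, rfl⟩ hne hle
        have hxy : x ≠ y := fun h => hne (by rw [h])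
        rw [hiff] at hle
        rw [MulEquiv.apply_symm_apply, MulEquiv.apply_symm_apply] at hle
        exact hanti hx hy hxy hle.1
    · refine ⟨(fun a => e.symm (1, a)) '' A₂, ?_, ?_⟩
      · apply Set.Infinite.image _ hinf
        intro x _ y _ hxy
        have := e.symm.injective hxy
        exact (Prod.mk.injEq _ _ _ _ ▸ this).2
      · rintro _ ⟨x, hx, rfl⟩ _ ⟨y, hy, rfl⟩ hne hle
        have hxy : x ≠ y := fun h => hne (by rw [h])
        rw [hiff] at hle
        rw [MulEquiv.apply_symm_apply, MulEquiv.apply_symm_apply] at hle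
        exact hanti hx hy hxy hle.2
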